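/- Let n ≥ q ≥ 1 be integers, let v ∈ ℝⁿ have all entries positive, let X ∈ F_v, and let X⊥ be an n×(n−q) real matrix such that (X X⊥) is orthogonal. Let g : ℝ^{n×q} → ℝ be convex and Lipschitz continuous with constant L_g, let ξ ∈ ℝ^{n×q}, let μ > 0, define ℓ(η) = ⟨ξ, η⟩ + (1/(2μ))‖η‖_F² + g(X + η), and let Q be the orthogonal projection of ℝ^{n×q} (with the Frobenius inner product) onto the subspace N_X. Suppose w minimizes ℓ over the affine set {η ∈ ℝ^{n×q} : Qη = Qw}; set ε = Qw and v̂ = w − ε. If ‖ε‖_F ≤ √(4μ²L_g² + ‖v̂‖_F²/2) − 2μL_g, then for every α ∈ [0,1] one has ℓ(α v̂) − ℓ(0) ≤ − (α(1 − 2α)/(4μ)) ‖v̂‖_F². -/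

import Mathlib

open Matrix

section Stmt15Aux
variable {n q : ℕ}

private lemma tr_comm' (A B : Matrix (Fin n) (Fin q) ℝ) :
    Matrix.trace (Aᵀ * B) = Matrix.trace (Bᵀ * A) := by
  rw [← Matrix.trace_transpose (Aᵀ * B), Matrix.transpose_mul, Matrix.transpose_transpose]

private lemma tr_add_left' (A B C : Matrix (Fin n) (Fin q) ℝ) :
    Matrix.trace ((A + B)ᵀ * C) = Matrix.trace (Aᵀ * C) + Matrix.trace (Bᵀ * C) := by
  rw [Matrix.transpose_add, Matrix.add_mul, Matrix.trace_add]

private lemma tr_add_right' (A B C : Matrix (Fin n) (Fin q) ℝ) :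
    Matrix.trace (Aᵀ * (B + C)) = Matrix.trace (Aᵀ * B) + Matrix.trace (Aᵀ * C) := by
  rw [Matrix.mul_add, Matrix.trace_add]

private lemma tr_smul_left' (c : ℝ) (A B : Matrix (Fin n) (Fin q) ℝ) :
    Matrix.trace ((c • A)ᵀ * B) = c * Matrix.trace (Aᵀ * B) := by
  rw [Matrix.transpose_smul, Matrix.smul_mul, Matrix.trace_smul, smul_eq_mul]

private lemma tr_smul_right' (c : ℝ) (A B : Matrix (Fin n) (Fin q) ℝ) :
    Matrix.trace (Aᵀ * (c • B)) = c * Matrix.trace (Aᵀ * B) := by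
  rw [Matrix.mul_smul, Matrix.trace_smul, smul_eq_mul]

private lemma tr_neg_neg' (A : Matrix (Fin n) (Fin q) ℝ) :
    Matrix.trace ((-A)ᵀ * (-A)) = Matrix.trace (Aᵀ * A) := by
  rw [Matrix.transpose_neg, Matrix.neg_mul, Matrix.mul_neg, neg_neg]

private lemma tr_nonneg' (A : Matrix (Fin n) (Fin q) ℝ) :
    0 ≤ Matrix.trace (Aᵀ * A) := by
  simp only [Matrix.trace, Matrix.diag, Matrix.mul_apply, Matrix.transpose_apply]
  exact Finset.sum_nonneg fun i _ => Finset.sum_nonneg fun j _ => mul_self_nonneg _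

end Stmt15Aux

set_option maxHeartbeats 1000000 in
/-- In the setting of Statement 14, with `ε = Qw` and `v̂ = w − ε`, if
`‖ε‖_F ≤ √(4μ²L_g² + ‖v̂‖_F²/2) − 2μL_g`, then for every `α ∈ [0, 1]`,
`ℓ(α v̂) − ℓ(0) ≤ −(α(1 − 2α)/(4μ))‖v̂‖_F²`. -/
theorem stmt_15 (n q : ℕ) (hq : 1 ≤ q) (hnq : q ≤ n)
    (v : Fin n → ℝ) (hv : ∀ i, 0 < v i)
    (X : Matrix (Fin n) (Fin q) ℝ)
    (hX : Xᵀ * X = 1 ∧ ∃ c : Fin q → ℝ, X *ᵥ c = v)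
    (Xp : Matrix (Fin n) (Fin (n - q)) ℝ)
    (hO : (fromCols X Xp)ᵀ * fromCols X Xp = 1)
    (Nset : Set (Matrix (Fin n) (Fin q) ℝ))
    (hN : Nset = {U | ∃ (S : Matrix (Fin q) (Fin q) ℝ) (u : Fin (n - q) → ℝ),
      Sᵀ = S ∧ U = X * S + vecMulVec (Xp *ᵥ u) (v ᵥ* X)})
    (g : Matrix (Fin n) (Fin q) ℝ → ℝ) (hg : ConvexOn ℝ Set.univ g)
    (Lg : ℝ)
    (hLip : ∀ U V : Matrix (Fin n) (Fin q) ℝ,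
      |g U - g V| ≤ Lg * Real.sqrt (Matrix.trace ((U - V)ᵀ * (U - V))))
    (ξ : Matrix (Fin n) (Fin q) ℝ) (μ : ℝ) (hμ : 0 < μ)
    (l : Matrix (Fin n) (Fin q) ℝ → ℝ)
    (hl : l = fun η => Matrix.trace (ξᵀ * η) +
      (1 / (2 * μ)) * Matrix.trace (ηᵀ * η) + g (X + η))
    (Q : Matrix (Fin n) (Fin q) ℝ →ₗ[ℝ] Matrix (Fin n) (Fin q) ℝ)
    (hQmem : ∀ z, Q z ∈ Nset)
    (hQid : ∀ z ∈ Nset, Q z = z)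
    (hQorth : ∀ z, ∀ u ∈ Nset, Matrix.trace ((z - Q z)ᵀ * u) = 0)
    (w : Matrix (Fin n) (Fin q) ℝ)
    (hwmin : ∀ η : Matrix (Fin n) (Fin q) ℝ, Q η = Q w → l w ≤ l η)
    (ε vh : Matrix (Fin n) (Fin q) ℝ) (hε : ε = Q w) (hvh : vh = w - ε)
    (hsmall : Real.sqrt (Matrix.trace (εᵀ * ε)) ≤
      Real.sqrt (4 * μ ^ 2 * Lg ^ 2 + Matrix.trace (vhᵀ * vh) / 2) - 2 * μ * Lg) :
    ∀ α : ℝ, 0 ≤ α → α ≤ 1 →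
      l (α • vh) - l 0 ≤
        -(α * (1 - 2 * α) / (4 * μ)) * Matrix.trace (vhᵀ * vh) := by
  intro α hα hα1
  have hμne : μ ≠ 0 := ne_of_gt hμ
  -- Lg ≥ 0
  have hLg0 : 0 ≤ Lg := by
    have hn : 0 < n := lt_of_lt_of_le hq hnq
    set U : Matrix (Fin n) (Fin q) ℝ := Matrix.single ⟨0, hn⟩ ⟨0, hq⟩ 1 with hU
    have h := hLip U 0
    have htr : Matrix.trace ((U - 0)ᵀ * (U - 0)) = 1 := by
      simp only [sub_zero, hU, Matrix.trace, Matrix.diag, Matrix.mul_apply,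
        Matrix.transpose_apply, Matrix.single, Matrix.of_apply]
      rw [Finset.sum_eq_single (⟨0, hq⟩ : Fin q)]
      · rw [Finset.sum_eq_single (⟨0, hn⟩ : Fin n)]
        · simp
        · intro b _ hb; simp [hb, Ne.symm hb]
        · simp
      · intro b _ hb
        apply Finset.sum_eq_zero
        intro i _
        simp [hb.symm]
      · simp
    rw [htr, Real.sqrt_one, mul_one] at h
    exact le_trans (abs_nonneg _) h
  -- projection facts
  have hεmem : ε ∈ Nset := hε ▸ hQmem w
  have hQε : Q ε = ε := hQid ε hεmem
  have hQvh : Q vh = 0 := by rw [hvh, map_sub, hQε, hε, sub_self]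
  have orth : Matrix.trace (vhᵀ * ε) = 0 := by
    have h := hQorth w ε hεmem
    rwa [← hε, ← hvh] at h
  have orth' : Matrix.trace (εᵀ * vh) = 0 := by rw [tr_comm']; exact orth
  have hw : w = vh + ε := by rw [hvh]; abel
  subst hw
  -- scalar abbreviations
  set T := Matrix.trace (vhᵀ * vh) with hT
  set A := Matrix.trace (εᵀ * ε) with hA
  set Pv := Matrix.trace (ξᵀ * vh) with hPv
  set Pe := Matrix.trace (ξᵀ * ε) with hPe
  have hT0 : 0 ≤ T := tr_nonneg' vh
  have hA0 : 0 ≤ A := tr_nonneg' ε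
  -- expansions of l, multiplied by 2μ
  have lexp1 : ∀ r : ℝ, 2*μ * l (r • vh + ε)
      = 2*μ*(r*Pv) + 2*μ*Pe + (r^2*T + A) + 2*μ*g (X + (r • vh + ε)) := by
    intro r
    simp only [hl]
    simp only [tr_add_right', tr_smul_right', tr_add_left', tr_smul_left', orth, orth',
      ← hT, ← hA, ← hPv, ← hPe]
    field_simp
    ring
  have lexp2 : ∀ r : ℝ, 2*μ * l (r • vh)
      = 2*μ*(r*Pv) + r^2*T + 2*μ*g (X + r • vh) := by
    intro r
    simp only [hl]
    simp only [tr_smul_right', tr_smul_left', ← hT, ← hPv]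
    field_simp
  have hl0 : 2*μ * l 0 = 2*μ*g X := by
    have h := lexp2 0
    simpa using h
  have hlw : 2*μ * l (vh + ε)
      = 2*μ*Pv + 2*μ*Pe + (T + A) + 2*μ*g (X + (vh + ε)) := by
    have h := lexp1 1
    rw [one_smul] at h
    rw [h]; ring
  have hlε : 2*μ * l ε = 2*μ*Pe + A + 2*μ*g (X + ε) := by
    have h := lexp1 0
    simp only [zero_smul, zero_add] at h
    rw [h]; ring
  have hlvh : 2*μ * l vh = 2*μ*Pv + T + 2*μ*g (X + vh) := by
    have h := lexp2 1
    rw [one_smul] at h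
    rw [h]; ring
  -- shorthand for the g-values
  set G1 := g (X + (vh + ε)) with hG1
  set G0 := g (X + ε) with hG0
  set H1 := g (X + vh) with hH1
  set H0 := g X with hH0
  -- the strong convexity family
  have family : ∀ t : ℝ, 0 < t → t ≤ 1 →
      2*μ*Pv + T + 2*μ*G1 - 2*μ*G0 ≤ -(1-t)*T := by
    intro t ht ht1
    have hQt : Q ((1-t) • vh + ε) = Q (vh + ε) := by
      simp [map_add, _root_.map_smul, hQvh, hQε, smul_zero]
    have h1 : l (vh + ε) ≤ l ((1-t) • vh + ε) := hwmin _ hQt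
    have h1' : 2*μ * l (vh + ε) ≤ 2*μ * l ((1-t) • vh + ε) :=
      mul_le_mul_of_nonneg_left h1 (by positivity)
    rw [hlw, lexp1 (1-t)] at h1'
    have hpt : X + ((1-t) • vh + ε) = (1-t) • (X + (vh + ε)) + t • (X + ε) := by
      module
    have gconv : g (X + ((1-t) • vh + ε)) ≤ (1-t) * G1 + t * G0 := by
      rw [hpt, hG1, hG0]
      have := hg.2 (Set.mem_univ (X + (vh + ε))) (Set.mem_univ (X + ε))
        (by linarith : (0:ℝ) ≤ 1 - t) (le_of_lt ht) (by ring)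
      simpa [smul_eq_mul] using this
    have gconv' : 2*μ*g (X + ((1-t) • vh + ε)) ≤ 2*μ*((1-t) * G1 + t * G0) :=
      mul_le_mul_of_nonneg_left gconv (by positivity)
    have key : t * ((2*μ*Pv + T + 2*μ*G1 - 2*μ*G0) + (1-t)*T) ≤ 0 := by
      linarith [h1', gconv']
    by_contra hcon
    push_neg at hcon
    have hpos : 0 < (2*μ*Pv + T + 2*μ*G1 - 2*μ*G0) + (1-t)*T := by linarith
    exact absurd (mul_pos ht hpos) (not_lt.mpr key)
  -- pass to the limit t → 0
  have hD : 2*μ*Pv + T + 2*μ*G1 - 2*μ*G0 ≤ -T := by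
    set E := 2*μ*Pv + T + 2*μ*G1 - 2*μ*G0 with hE
    have hE0 : E ≤ 0 := by have := family 1 one_pos le_rfl; linarith
    by_contra hcon
    push_neg at hcon
    have hTpos : 0 < T := by linarith
    have ht : 0 < (1 + E/T)/2 := by
      have : -1 < E/T := by
        rw [lt_div_iff₀ hTpos]; linarith
      linarith
    have ht1 : (1 + E/T)/2 ≤ 1 := by
      have : E/T ≤ 0 := div_nonpos_of_nonpos_of_nonneg hE0 hT0
      linarith
    have hf := family ((1 + E/T)/2) ht ht1
    have hET : E/T * T = E := div_mul_cancel₀ E (ne_of_gt hTpos)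
    nlinarith [hf, hET]
  -- Lipschitz bounds
  have sa0 : 0 ≤ Real.sqrt A := Real.sqrt_nonneg A
  set sa := Real.sqrt A with hsa
  have hsa2 : sa^2 = A := Real.sq_sqrt hA0
  have hLA : |H1 - G1| ≤ Lg * sa := by
    have h := hLip (X + vh) (X + (vh + ε))
    have hd : (X + vh) - (X + (vh + ε)) = -ε := by module
    rwa [hd, tr_neg_neg', ← hA, ← hsa, ← hH1, ← hG1] at h
  have hLB : |G0 - H0| ≤ Lg * sa := by
    have h := hLip (X + ε) X
    have hd : (X + ε) - X = ε := by module
    rwa [hd, ← hA, ← hsa, ← hG0, ← hH0] at h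
  -- from hsmall
  have hA4 : A + 4*μ*Lg*sa ≤ T/2 := by
    have h1 : sa + 2*μ*Lg ≤ Real.sqrt (4*μ^2*Lg^2 + T/2) := by
      rw [hsa, hA]; linarith [hsmall]
    have h2 : (sa + 2*μ*Lg)^2 ≤ (Real.sqrt (4*μ^2*Lg^2 + T/2))^2 := by
      apply pow_le_pow_left₀ (by positivity) h1
    rw [Real.sq_sqrt (by positivity)] at h2
    nlinarith [hsa2]
  -- key decrease
  have hkey : 2*μ*Pv + 2*μ*H1 - 2*μ*H0 ≤ -(3/2)*T := by
    have h1 := (abs_le.mp hLA).2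
    have h2 := (abs_le.mp hLB).2
    have h1' : 2*μ*(H1 - G1) ≤ 2*μ*(Lg*sa) := mul_le_mul_of_nonneg_left h1 (by positivity)
    have h2' : 2*μ*(G0 - H0) ≤ 2*μ*(Lg*sa) := mul_le_mul_of_nonneg_left h2 (by positivity)
    nlinarith [hD, hA4, h1', h2', hA0, hμ]
  -- final convexity step
  have hpt2 : X + α • vh = (1-α) • X + α • (X + vh) := by module
  have gconv2 : g (X + α • vh) ≤ (1-α) * H0 + α * H1 := by
    rw [hpt2, hH0, hH1]
    have := hg.2 (Set.mem_univ X) (Set.mem_univ (X + vh))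
      (by linarith : (0:ℝ) ≤ 1 - α) hα (by ring)
    simpa [smul_eq_mul] using this
  have gconv2' : 2*μ*g (X + α • vh) ≤ 2*μ*((1-α) * H0 + α * H1) :=
    mul_le_mul_of_nonneg_left gconv2 (by positivity)
  rw [show -(α * (1 - 2*α) / (4*μ)) * T = (-(α * (1 - 2*α)) * T) / (4*μ) by ring,
    le_div_iff₀ (by positivity : (0:ℝ) < 4*μ)]
  have hlα := lexp2 α
  nlinarith [hlα, hl0, gconv2', mul_le_mul_of_nonneg_left hkey hα,
    mul_nonneg hα hT0, mul_nonneg (mul_nonneg hα hα) hT0]
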